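/- Let p ≥ 2, μ ∈ [0,1], and let g be a C² scalar function on an open set of ℝⁿ. With V_p(ξ) = (μ² + |ξ|²)^{(p−2)/4} ξ, there is a constant C = C(p) such that C^{−1} |D²g|² (μ² + |Dg|²)^{(p−2)/2} ≤ |D(V_p(Dg))|² ≤ C |D²g|² (μ² + |Dg|²)^{(p−2)/2} pointwise. -/

import Mathlib

open Real Asymptotics InnerProductSpace
open scoped RealInnerProductSpace

private lemma Vp_aux {E : Type*} [NormedAddCommGroup E] [InnerProductSpace ℝ E]
    (A L : E →L[ℝ] E) (ξ : E) (c β : ℝ) (hc : 0 ≤ c) (hβ : 0 ≤ β)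
    (hL : ∀ h, L h = c • A h + (β * ⟪ξ, A h⟫) • ξ) :
    c * ‖A‖ ≤ ‖L‖ ∧ ‖L‖ ≤ (c + β * ‖ξ‖ ^ 2) * ‖A‖ := by
  constructor
  · have hlow : ∀ h, c * ‖A h‖ ≤ ‖L h‖ := by
      intro h
      rcases eq_or_ne (A h) 0 with h0 | h0
      · simp [h0]
      have hAh : 0 < ‖A h‖ := norm_pos_iff.2 h0
      have hinner : c * ‖A h‖ ^ 2 ≤ ⟪L h, A h⟫ := by
        rw [hL h, inner_add_left, real_inner_smul_left, real_inner_smul_left,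
          real_inner_self_eq_norm_sq]
        nlinarith [mul_self_nonneg (⟪ξ, A h⟫ : ℝ)]
      have h2 : ⟪L h, A h⟫ ≤ ‖L h‖ * ‖A h‖ := real_inner_le_norm _ _
      nlinarith
    have hsm : ‖c • A‖ ≤ ‖L‖ := by
      apply ContinuousLinearMap.opNorm_le_bound _ (norm_nonneg L)
      intro h
      rw [ContinuousLinearMap.smul_apply]
      calc ‖c • A h‖ = c * ‖A h‖ := by
            rw [norm_smul, Real.norm_eq_abs, abs_of_nonneg hc]
        _ ≤ ‖L h‖ := hlow h
        _ ≤ ‖L‖ * ‖h‖ := L.le_opNorm h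
    have hns : ‖c • A‖ = c * ‖A‖ := by
      rw [norm_smul (α := ℝ) (β := _ →L[ℝ] _) c A, Real.norm_eq_abs, abs_of_nonneg hc]
    rwa [hns] at hsm
  · apply ContinuousLinearMap.opNorm_le_bound _ (by positivity)
    intro h
    have h1 : ‖c • A h‖ ≤ c * (‖A‖ * ‖h‖) :=
      (norm_smul _ _).le.trans (by
        rw [Real.norm_eq_abs, abs_of_nonneg hc]
        exact mul_le_mul_of_nonneg_left (A.le_opNorm h) hc)
    have h2 : ‖(β * ⟪ξ, A h⟫) • ξ‖ ≤ β * (‖ξ‖ ^ 2 * (‖A‖ * ‖h‖)) := by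
      rw [norm_smul, Real.norm_eq_abs, abs_mul, abs_of_nonneg hβ]
      have hi : |(⟪ξ, A h⟫ : ℝ)| ≤ ‖ξ‖ * ‖A h‖ := abs_real_inner_le_norm _ _
      have hAo : ‖A h‖ ≤ ‖A‖ * ‖h‖ := A.le_opNorm h
      have hi2 : |(⟪ξ, A h⟫ : ℝ)| ≤ ‖ξ‖ * (‖A‖ * ‖h‖) :=
        hi.trans (mul_le_mul_of_nonneg_left hAo (norm_nonneg ξ))
      calc β * |(⟪ξ, A h⟫ : ℝ)| * ‖ξ‖ ≤ β * (‖ξ‖ * (‖A‖ * ‖h‖)) * ‖ξ‖ := by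
            apply mul_le_mul_of_nonneg_right _ (norm_nonneg ξ)
            exact mul_le_mul_of_nonneg_left hi2 hβ
        _ = β * (‖ξ‖ * ‖ξ‖ * (‖A‖ * ‖h‖)) := by ring
        _ = β * (‖ξ‖ ^ 2 * (‖A‖ * ‖h‖)) := by rw [sq]
    calc ‖L h‖ = ‖c • A h + (β * ⟪ξ, A h⟫) • ξ‖ := by rw [hL h]
      _ ≤ ‖c • A h‖ + ‖(β * ⟪ξ, A h⟫) • ξ‖ := norm_add_le _ _
      _ ≤ c * (‖A‖ * ‖h‖) + β * (‖ξ‖ ^ 2 * (‖A‖ * ‖h‖)) := add_le_add h1 h2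
      _ = (c + β * ‖ξ‖ ^ 2) * ‖A‖ * ‖h‖ := by ring


/-- Pointwise comparison between `|D(V_p(Dg))|²` and `|D²g|² (μ² + |Dg|²)^((p-2)/2)`. -/
theorem Vp_derivative_estimate (n : ℕ) (p μ : ℝ) (hp : 2 ≤ p)
    (hμ : μ ∈ Set.Icc (0 : ℝ) 1)
    (Ω : Set (EuclideanSpace ℝ (Fin n))) (hΩ : IsOpen Ω)
    (g : EuclideanSpace ℝ (Fin n) → ℝ) (hg : ContDiffOn ℝ 2 g Ω) :
    ∃ C > 0, ∀ x ∈ Ω,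
      C⁻¹ * ‖fderiv ℝ (gradient g) x‖ ^ 2 *
          (μ ^ 2 + ‖gradient g x‖ ^ 2) ^ ((p - 2) / 2) ≤
        ‖fderiv ℝ
            (fun y => ((μ ^ 2 + ‖gradient g y‖ ^ 2) ^ ((p - 2) / 4)) • gradient g y)
            x‖ ^ 2 ∧
      ‖fderiv ℝ
          (fun y => ((μ ^ 2 + ‖gradient g y‖ ^ 2) ^ ((p - 2) / 4)) • gradient g y)
          x‖ ^ 2 ≤
        C * ‖fderiv ℝ (gradient g) x‖ ^ 2 *
          (μ ^ 2 + ‖gradient g x‖ ^ 2) ^ ((p - 2) / 2) := by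
  have hp0 : 0 < p := lt_of_lt_of_le two_pos hp
  refine ⟨(p / 2) ^ 2, by positivity, ?_⟩
  have hC1 : (1 : ℝ) ≤ (p / 2) ^ 2 := by nlinarith
  have hCinv : ((p / 2) ^ 2)⁻¹ ≤ 1 := by
    rw [inv_le_one_iff₀]; right; exact hC1
  intro x hx
  set F : EuclideanSpace ℝ (Fin n) → EuclideanSpace ℝ (Fin n) :=
    fun y => ((μ ^ 2 + ‖gradient g y‖ ^ 2) ^ ((p - 2) / 4)) • gradient g y with hF
  have hgx : ContDiffAt ℝ 2 g x := hg.contDiffAt (hΩ.mem_nhds hx)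
  have hdf : DifferentiableAt ℝ (fderiv ℝ g) x :=
    (hgx.fderiv_right (m := 1) (by norm_num)).differentiableAt one_ne_zero
  have hgrad : DifferentiableAt ℝ (gradient g) x := by
    have h2 : gradient g = (toDual ℝ (EuclideanSpace ℝ (Fin n))).symm ∘ fderiv ℝ g := rfl
    rw [h2]
    exact ((toDual ℝ (EuclideanSpace ℝ (Fin n))).symm.comp_differentiableAt_iff).2 hdf
  set A := fderiv ℝ (gradient g) x with hA
  have hAd : HasFDerivAt (gradient g) A x := hgrad.hasFDerivAt
  set ξ := gradient g x with hξ
  set s := μ ^ 2 + ‖ξ‖ ^ 2 with hs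
  have hs0 : 0 ≤ s := by positivity
  set α := (p - 2) / 4 with hα
  have hα0 : 0 ≤ α := by
    have h24 : 0 ≤ p - 2 := by linarith
    positivity
  by_cases hspos : 0 < s
  · -- main case
    have hS : HasFDerivAt (fun y => μ ^ 2 + ‖gradient g y‖ ^ 2)
        (2 • (innerSL ℝ ξ).comp A) x := hAd.norm_sq.const_add (μ ^ 2)
    have hφ : HasFDerivAt (fun y => (μ ^ 2 + ‖gradient g y‖ ^ 2) ^ α)
        ((α * s ^ (α - 1)) • (2 • (innerSL ℝ ξ).comp A)) x :=
      hS.rpow_const (Or.inl (ne_of_gt hspos))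
    have hFd : HasFDerivAt F
        (s ^ α • A +
          ((α * s ^ (α - 1)) • (2 • (innerSL ℝ ξ).comp A)).smulRight ξ) x := hφ.smul hAd
    have hfd : fderiv ℝ F x =
        s ^ α • A + ((α * s ^ (α - 1)) • (2 • (innerSL ℝ ξ).comp A)).smulRight ξ :=
      hFd.fderiv
    set L := s ^ α • A + ((α * s ^ (α - 1)) • (2 • (innerSL ℝ ξ).comp A)).smulRight ξ with hL
    set β := 2 * α * s ^ (α - 1) with hβ
    have hβ0 : 0 ≤ β := by positivity
    have hLapp : ∀ h, L h = s ^ α • A h + (β * ⟪ξ, A h⟫) • ξ := by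
      intro h
      rw [hL, hβ]
      simp only [ContinuousLinearMap.add_apply, ContinuousLinearMap.smul_apply,
        ContinuousLinearMap.smulRight_apply, ContinuousLinearMap.comp_apply,
        innerSL_apply_apply, smul_eq_mul]
      module
    obtain ⟨hlow, hup⟩ := Vp_aux A L ξ (s ^ α) β (rpow_nonneg hs0 α) hβ0 hLapp
    have hβs : β * ‖ξ‖ ^ 2 ≤ 2 * α * s ^ α := by
      have hξs : ‖ξ‖ ^ 2 ≤ s := by nlinarith [sq_nonneg μ]
      have hkey : s ^ (α - 1) * s = s ^ α := by
        rw [← Real.rpow_add_one (ne_of_gt hspos)]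
        ring_nf
      calc β * ‖ξ‖ ^ 2 ≤ β * s := mul_le_mul_of_nonneg_left hξs hβ0
        _ = 2 * α * (s ^ (α - 1) * s) := by rw [hβ]; ring
        _ = 2 * α * s ^ α := by rw [hkey]
    have hup2 : ‖L‖ ≤ (p / 2) * (s ^ α * ‖A‖) := by
      calc ‖L‖ ≤ (s ^ α + β * ‖ξ‖ ^ 2) * ‖A‖ := hup
        _ ≤ (s ^ α + 2 * α * s ^ α) * ‖A‖ := by
            apply mul_le_mul_of_nonneg_right _ (norm_nonneg A)
            linarith
        _ = (1 + 2 * α) * (s ^ α * ‖A‖) := by ring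
        _ = (p / 2) * (s ^ α * ‖A‖) := by rw [hα]; ring_nf
    have hsq : s ^ α * s ^ α = s ^ ((p - 2) / 2) := by
      rw [← Real.rpow_add hspos]
      congr 1
      rw [hα]; ring
    rw [hfd]
    constructor
    · calc ((p / 2) ^ 2)⁻¹ * ‖A‖ ^ 2 * s ^ ((p - 2) / 2)
          ≤ 1 * ‖A‖ ^ 2 * s ^ ((p - 2) / 2) := by
            apply mul_le_mul_of_nonneg_right _ (rpow_nonneg hs0 _)
            apply mul_le_mul_of_nonneg_right hCinv (by positivity)
        _ = (s ^ α * ‖A‖) ^ 2 := by rw [← hsq]; ring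
        _ ≤ ‖L‖ ^ 2 := pow_le_pow_left₀ (by positivity) hlow 2
    · calc ‖L‖ ^ 2 ≤ ((p / 2) * (s ^ α * ‖A‖)) ^ 2 :=
            pow_le_pow_left₀ (norm_nonneg _) hup2 2
        _ = (p / 2) ^ 2 * ‖A‖ ^ 2 * s ^ ((p - 2) / 2) := by rw [← hsq]; ring
  · -- degenerate case
    clear_value F A ξ s α
    have hs_eq : s = 0 := le_antisymm (not_lt.1 hspos) hs0
    have h1 : μ ^ 2 + ‖ξ‖ ^ 2 = 0 := by rw [← hs, hs_eq]
    have h2 := (add_eq_zero_iff_of_nonneg (sq_nonneg μ) (sq_nonneg ‖ξ‖)).1 h1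
    have hμ0 : μ = 0 := by
      have := (pow_eq_zero_iff (n := 2) (by norm_num)).1 h2.1
      exact this
    have hξ0 : ξ = 0 := by
      have := (pow_eq_zero_iff (n := 2) (by norm_num)).1 h2.2
      simpa using this
    rcases eq_or_lt_of_le hp with hp2 | hp2
    · -- p = 2
      have hα0' : α = 0 := by rw [hα, ← hp2]; norm_num
      have hFg : F = gradient g := by
        funext y
        simp [hF, ← hα, hα0', Real.rpow_zero]
      have hexp : s ^ ((p - 2) / 2) = 1 := by
        rw [show (p - 2) / 2 = 0 by rw [← hp2]; ring, Real.rpow_zero]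
      rw [hFg, ← hA, hexp]
      constructor
      · rw [mul_one]
        calc ((p / 2) ^ 2)⁻¹ * ‖A‖ ^ 2 ≤ 1 * ‖A‖ ^ 2 :=
              mul_le_mul_of_nonneg_right hCinv (sq_nonneg _)
          _ = ‖A‖ ^ 2 := one_mul _
      · rw [mul_one]
        exact le_mul_of_one_le_left (sq_nonneg _) hC1
    · -- p > 2
      have hexp : s ^ ((p - 2) / 2) = 0 := by
        rw [hs_eq]
        exact Real.zero_rpow (ne_of_gt (show (p - 2) / 2 > 0 by linarith))
      have hFx : fderiv ℝ F x = 0 := by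
        have hF0 : HasFDerivAt F
            (0 : EuclideanSpace ℝ (Fin n) →L[ℝ] EuclideanSpace ℝ (Fin n)) x := by
          rw [hasFDerivAt_iff_isLittleO]
          have hFxv : F x = 0 := by simp [hF, ← hξ, hξ0]
          simp only [hFxv, sub_zero, ContinuousLinearMap.zero_apply]
          have hbig : (fun y => gradient g y) =O[nhds x] (fun y => y - x) := by
            have hb := hAd.isBigO_sub
            simpa [← hξ, hξ0] using hb
          have hsm : (fun y => (μ ^ 2 + ‖gradient g y‖ ^ 2) ^ α) =o[nhds x]
              (fun _ => (1 : ℝ)) := by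
            rw [isLittleO_one_iff]
            have hcont : Filter.Tendsto (fun y => μ ^ 2 + ‖gradient g y‖ ^ 2)
                (nhds x) (nhds 0) := by
              have hc1 : ContinuousAt (fun y => μ ^ 2 + ‖gradient g y‖ ^ 2) x :=
                continuousAt_const.add ((hgrad.continuousAt.norm).pow 2)
              have hc2 := hc1.tendsto
              simpa [← hξ, ← hs, hs_eq] using hc2
            have ht := hcont.rpow_const (p := α) (Or.inr hα0)
            rwa [Real.zero_rpow (ne_of_gt (show (0:ℝ) < α by rw [hα]; linarith))] at ht
          have hsmall := hsm.smul_isBigO hbig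
          simp only [one_smul] at hsmall
          exact hsmall.congr_left (fun y => by simp [hF])
        exact hF0.fderiv
      rw [hFx, hexp]
      simp only [norm_zero, mul_zero]
      norm_num
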